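/- For g(x) = (1−x²)² and any f ∈ C⁶ on a neighborhood of [−1,1], the bilinear concomitant satisfies lim_{x→1} [f,(1−x²)²]_K(x) = 192 f(1) and lim_{x→−1} [f,(1−x²)²]_K(x) = −192 f(−1). -/

import Mathlib

open Set Filter Topology intervalIntegral

noncomputable def krallAlpha (A B : ℝ) : ℝ := 3*A + 3*B + 6

noncomputable def krallPi (A B : ℝ) (x : ℝ) : ℝ :=
  (-6*A - 6*B - 12*A*B)*x^2 + (12*A - 12*B)*x + (12*A*B + 18*A + 18*B + 24)

/-- The sixth-order Krall differential expression, expanded form. -/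
noncomputable def lK (A B : ℝ) (y : ℝ → ℝ) (x : ℝ) : ℝ :=
  (x^2 - 1)^3 * iteratedDeriv 6 y x
  + 18*x*(x^2 - 1)^2 * iteratedDeriv 5 y x
  + (x^2 - 1)*((3*A + 3*B + 96)*x^2 - 3*A - 3*B - 36) * iteratedDeriv 4 y x
  + (24*A + 24*B + 168)*x*(x^2 - 1) * iteratedDeriv 3 y x
  + ((12*A*B + 42*A + 42*B + 72)*x^2 + (12*B - 12*A)*x - 12*A*B - 30*A - 30*B - 72)
      * iteratedDeriv 2 y x
  + ((24*A*B + 12*A + 12*B)*x + 12*B - 12*A) * deriv y x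

/-- The sixth-order Krall differential expression, Lagrangian symmetric form. -/
noncomputable def lKsym (A B : ℝ) (y : ℝ → ℝ) (x : ℝ) : ℝ :=
  - iteratedDeriv 3 (fun t => (1 - t^2)^3 * iteratedDeriv 3 y t) x
  + iteratedDeriv 2 (fun t => (1 - t^2)*(12 + krallAlpha A B * (1 - t^2)) * iteratedDeriv 2 y t) x
  - deriv (fun t => krallPi A B t * deriv y t) x

/-- Λ[f](x) = −((1−x²)³f‴(x))′ + (1−x²)(12+α(1−x²))f″(x). -/
noncomputable def LamK (A B : ℝ) (f : ℝ → ℝ) (x : ℝ) : ℝ :=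
  - deriv (fun t => (1 - t^2)^3 * iteratedDeriv 3 f t) x
  + (1 - x^2)*(12 + krallAlpha A B * (1 - x^2)) * iteratedDeriv 2 f x

/-- [f,1]_K(x) = −((1−x²)³f‴)″ + ((1−x²)(12+α(1−x²))f″)′ − π(x)f′(x). -/
noncomputable def concOne (A B : ℝ) (f : ℝ → ℝ) (x : ℝ) : ℝ :=
  - iteratedDeriv 2 (fun t => (1 - t^2)^3 * iteratedDeriv 3 f t) x
  + deriv (fun t => (1 - t^2)*(12 + krallAlpha A B * (1 - t^2)) * iteratedDeriv 2 f t) x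
  - krallPi A B x * deriv f x

/-- The bilinear concomitant [f,g]_K of the Krall expression (real-valued case). -/
noncomputable def conc (A B : ℝ) (f g : ℝ → ℝ) (x : ℝ) : ℝ :=
  concOne A B f x * g x - concOne A B g x * f x
  - LamK A B f x * deriv g x + LamK A B g x * deriv f x
  - (1 - x^2)^3 * (iteratedDeriv 3 f x * iteratedDeriv 2 g x
      - iteratedDeriv 2 f x * iteratedDeriv 3 g x)

/- ### Auxiliary lemmas -/

private lemma krall_auxIter {U : Set ℝ} (hU : IsOpen U) :
    ∀ (k : ℕ) (f : ℝ → ℝ) (n : ℕ), ContDiffOn ℝ ((n + k : ℕ) : WithTop ℕ∞) f U →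
      ContDiffOn ℝ (n : WithTop ℕ∞) (iteratedDeriv k f) U := by
  intro k
  induction k with
  | zero => intro f n h; simpa [iteratedDeriv_zero] using h
  | succ k ih =>
    intro f n h
    rw [iteratedDeriv_succ']
    apply ih
    apply h.deriv_of_isOpen hU
    apply le_of_eq
    push_cast
    ring

private lemma krall_hs (t : ℝ) : HasDerivAt (fun t : ℝ => 1 - t^2) (-(2*t)) t := by
  simpa using ((hasDerivAt_pow 2 t).const_sub 1)

/-- lim_{x→±1} [f,(1−x²)²]_K(x) = ±192 f(±1). -/
theorem krall_concomitant_with_one_minus_sq_squared (A B : ℝ) (hA : 0 < A) (hB : 0 < B)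
    (f : ℝ → ℝ) (U : Set ℝ) (hU : IsOpen U) (hUI : Set.Icc (-1 : ℝ) 1 ⊆ U)
    (hf : ContDiffOn ℝ 6 f U) :
    Filter.Tendsto (fun x => conc A B f (fun t => (1 - t^2)^2) x)
      (nhdsWithin 1 (Set.Ioo (-1 : ℝ) 1)) (nhds (192 * f 1)) ∧
    Filter.Tendsto (fun x => conc A B f (fun t => (1 - t^2)^2) x)
      (nhdsWithin (-1) (Set.Ioo (-1 : ℝ) 1)) (nhds (-192 * f (-1))) := by
  set α := krallAlpha A B with hα
  -- derivatives of g = (1-x^2)^2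
  have E1 : deriv (fun t : ℝ => (1 - t^2)^2) = fun x => 4*x^3 - 4*x := by
    funext t
    have := (krall_hs t).pow 2
    have h2 : HasDerivAt (fun t : ℝ => (1 - t^2)^2) (4*t^3 - 4*t) t := by
      exact this.congr_deriv (by push_cast; ring)
    exact h2.deriv
  have E2 : iteratedDeriv 2 (fun t : ℝ => (1 - t^2)^2) = fun x => 12*x^2 - 4 := by
    rw [iteratedDeriv_succ, iteratedDeriv_one, E1]
    funext t
    have : HasDerivAt (fun t : ℝ => 4*t^3 - 4*t) (12*t^2 - 4) t := by
      have h4 : HasDerivAt (fun t : ℝ => 4*t) (4:ℝ) t := by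
        simpa using (hasDerivAt_id t).const_mul (4:ℝ)
      have := ((hasDerivAt_pow 3 t).const_mul (4:ℝ)).sub h4
      exact this.congr_deriv (by push_cast; ring)
    exact this.deriv
  have E3 : iteratedDeriv 3 (fun t : ℝ => (1 - t^2)^2) = fun x => 24*x := by
    rw [iteratedDeriv_succ, E2]
    funext t
    have : HasDerivAt (fun t : ℝ => 12*t^2 - 4) (24*t) t := by
      have := ((hasDerivAt_pow 2 t).const_mul (12:ℝ)).sub_const (4:ℝ)
      exact this.congr_deriv (by push_cast; ring)
    exact this.deriv
  -- the P function (1-t^2)^3 * (24 t) and its derivatives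
  have EP : (fun t : ℝ => (1 - t^2)^3 * iteratedDeriv 3 (fun t : ℝ => (1 - t^2)^2) t)
      = fun t : ℝ => (1 - t^2)^3 * (24*t) := by rw [E3]
  have hPd : ∀ t : ℝ, HasDerivAt (fun t : ℝ => (1 - t^2)^3 * (24*t))
      (24 - 216*t^2 + 360*t^4 - 168*t^6) t := by
    intro t
    have h2 : HasDerivAt (fun t : ℝ => 24*t) (24 : ℝ) t := by
      simpa using (hasDerivAt_id t).const_mul (24:ℝ)
    have := ((krall_hs t).pow 3).mul h2
    exact this.congr_deriv (by simp only [Pi.mul_apply, Pi.pow_apply]; push_cast; ring)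
  have EP1 : deriv (fun t : ℝ => (1 - t^2)^3 * (24*t))
      = fun x => 24 - 216*x^2 + 360*x^4 - 168*x^6 := funext fun t => (hPd t).deriv
  have EP2 : iteratedDeriv 2 (fun t : ℝ => (1 - t^2)^3 * (24*t))
      = fun x => -432*x + 1440*x^3 - 1008*x^5 := by
    rw [iteratedDeriv_succ, iteratedDeriv_one, EP1]
    funext t
    have : HasDerivAt (fun t : ℝ => 24 - 216*t^2 + 360*t^4 - 168*t^6)
        (-432*t + 1440*t^3 - 1008*t^5) t := by
      have := (((hasDerivAt_const t (24:ℝ)).sub ((hasDerivAt_pow 2 t).const_mul (216:ℝ))).add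
        ((hasDerivAt_pow 4 t).const_mul (360:ℝ))).sub ((hasDerivAt_pow 6 t).const_mul (168:ℝ))
      exact this.congr_deriv (by push_cast; ring)
    exact this.deriv
  -- the Q function and its derivative
  have EQ : (fun t : ℝ => (1 - t^2)*(12 + α * (1 - t^2))
        * iteratedDeriv 2 (fun t : ℝ => (1 - t^2)^2) t)
      = fun t : ℝ => (1 - t^2)*(12 + α * (1 - t^2)) * (12*t^2 - 4) := by rw [E2]
  have EQ1 : deriv (fun t : ℝ => (1 - t^2)*(12 + α * (1 - t^2)) * (12*t^2 - 4))
      = fun x => (384 + 40*α)*x - (576 + 112*α)*x^3 + 72*α*x^5 := by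
    funext t
    have h1 : HasDerivAt (fun t : ℝ => 12 + α * (1 - t^2)) (α * (-(2*t))) t :=
      ((krall_hs t).const_mul α).const_add 12
    have h2 : HasDerivAt (fun t : ℝ => 12*t^2 - 4) (12*(2*t)) t := by
      have := ((hasDerivAt_pow 2 t).const_mul (12:ℝ)).sub_const (4:ℝ)
      exact this.congr_deriv (by push_cast; ring)
    have := ((krall_hs t).mul h1).mul h2
    have h3 : HasDerivAt (fun t : ℝ => (1 - t^2)*(12 + α * (1 - t^2)) * (12*t^2 - 4))
        ((384 + 40*α)*t - (576 + 112*α)*t^3 + 72*α*t^5) t := by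
      exact this.congr_deriv (by simp only [Pi.mul_apply, Pi.pow_apply]; push_cast; ring)
    exact h3.deriv
  -- closed forms for the g-parts of the concomitant
  have hCg : ∀ x : ℝ, concOne A B (fun t : ℝ => (1 - t^2)^2) x
      = -(-432*x + 1440*x^3 - 1008*x^5)
        + ((384 + 40*α)*x - (576 + 112*α)*x^3 + 72*α*x^5)
        - krallPi A B x * (4*x^3 - 4*x) := by
    intro x
    simp only [concOne, ← hα, EP, EP2, EQ, EQ1, E1]
  have hLg : ∀ x : ℝ, LamK A B (fun t : ℝ => (1 - t^2)^2) x
      = -(24 - 216*x^2 + 360*x^4 - 168*x^6)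
        + (1 - x^2)*(12 + α * (1 - x^2)) * (12*x^2 - 4) := by
    intro x
    simp only [LamK, ← hα, EP, EP1, E2]
  -- pointwise formula for the concomitant with g
  have hCeq : ∀ x : ℝ, conc A B f (fun t : ℝ => (1 - t^2)^2) x
      = concOne A B f x * (1 - x^2)^2
        - (-(-432*x + 1440*x^3 - 1008*x^5)
            + ((384 + 40*α)*x - (576 + 112*α)*x^3 + 72*α*x^5)
            - krallPi A B x * (4*x^3 - 4*x)) * f x
        - LamK A B f x * (4*x^3 - 4*x)
        + (-(24 - 216*x^2 + 360*x^4 - 168*x^6)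
            + (1 - x^2)*(12 + α * (1 - x^2)) * (12*x^2 - 4)) * deriv f x
        - (1 - x^2)^3 * (iteratedDeriv 3 f x * (12*x^2 - 4)
            - iteratedDeriv 2 f x * (24*x)) := by
    intro x
    simp only [conc, hCg, hLg, E1, E2, E3]
  -- continuity of the f-parts
  have hf3 : ContDiffOn ℝ 3 (iteratedDeriv 3 f) U := by
    have := krall_auxIter hU 3 f 3 (by exact_mod_cast hf)
    exact_mod_cast this
  have hf2 : ContDiffOn ℝ 4 (iteratedDeriv 2 f) U := by
    have := krall_auxIter hU 2 f 4 (by exact_mod_cast hf)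
    exact_mod_cast this
  have hF1 : ContDiffOn ℝ 3 (fun t : ℝ => (1 - t^2)^3 * iteratedDeriv 3 f t) U := by
    apply ContDiffOn.mul _ hf3
    apply ContDiff.contDiffOn
    fun_prop
  have hF2 : ContDiffOn ℝ 1
      (fun t : ℝ => (1 - t^2)*(12 + α * (1 - t^2)) * iteratedDeriv 2 f t) U := by
    apply ContDiffOn.mul _ (hf2.of_le (by norm_num))
    apply ContDiff.contDiffOn
    fun_prop
  have c1 : ContinuousOn (iteratedDeriv 2 (fun t : ℝ => (1 - t^2)^3 * iteratedDeriv 3 f t)) U := by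
    have := krall_auxIter hU 2 _ 0 (hF1.of_le (by norm_cast))
    exact this.continuousOn
  have c2 : ContinuousOn (deriv (fun t : ℝ => (1 - t^2)^3 * iteratedDeriv 3 f t)) U :=
    hF1.continuousOn_deriv_of_isOpen hU (by norm_num)
  have c3 : ContinuousOn
      (deriv (fun t : ℝ => (1 - t^2)*(12 + α * (1 - t^2)) * iteratedDeriv 2 f t)) U :=
    hF2.continuousOn_deriv_of_isOpen hU (by norm_num)
  have c4 : ContinuousOn (deriv f) U := hf.continuousOn_deriv_of_isOpen hU (by norm_num)
  have c5 : ContinuousOn (iteratedDeriv 2 f) U := hf2.continuousOn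
  have c6 : ContinuousOn (iteratedDeriv 3 f) U := hf3.continuousOn
  have c7 : ContinuousOn f U := hf.continuousOn
  have hCcont : ∀ x₀ ∈ U, ContinuousAt (fun x => conc A B f (fun t : ℝ => (1 - t^2)^2) x) x₀ := by
    intro x₀ hx₀
    have m := hU.mem_nhds hx₀
    have k1 := c1.continuousAt m
    have k2 := c2.continuousAt m
    have k3 := c3.continuousAt m
    have k4 := c4.continuousAt m
    have k5 := c5.continuousAt m
    have k6 := c6.continuousAt m
    have k7 := c7.continuousAt m
    simp only [hCeq, concOne, LamK, ← hα, krallPi]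
    fun_prop
  have hx1 : (1:ℝ) ∈ U := hUI (by norm_num)
  have hx2 : (-1:ℝ) ∈ U := hUI (by norm_num)
  have hval1 : conc A B f (fun t : ℝ => (1 - t^2)^2) 1 = 192 * f 1 := by
    rw [hCeq]
    norm_num [krallPi]
    ring
  have hval2 : conc A B f (fun t : ℝ => (1 - t^2)^2) (-1) = -192 * f (-1) := by
    rw [hCeq]
    norm_num [krallPi]
    exact Or.inl (by ring)
  constructor
  · apply tendsto_nhdsWithin_of_tendsto_nhds
    simpa [hval1] using (hCcont 1 hx1).tendsto
  · apply tendsto_nhdsWithin_of_tendsto_nhds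
    simpa [hval2] using (hCcont (-1) hx2).tendsto
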